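/- Let x, y ∈ ℝ³ be row vectors and T a 3×3 real matrix; set X = xᵀx, Y = yᵀy. For unit vectors k, ℓ ∈ ℝ³ let K = kᵀk, L = ℓᵀℓ, and define the objective f(k,ℓ) = Tr(XK + YL + TLTᵀK) and the matrix M(ℓ) = X + TLTᵀ + ⟨ℓ,Yℓᵀ⟩·I₃. Then the supremum of f(k,ℓ) over all pairs of unit vectors (k,ℓ) equals the supremum over all unit vectors ℓ of λ_max(M(ℓ)), where λ_max(M(ℓ)) denotes the largest eigenvalue of the real symmetric matrix M(ℓ). That is, the two-sided optimization reduces to a one-sided optimization. -/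

import Mathlib

open Matrix

section herm

set_option linter.unusedSectionVars false

variable {n : Type*} [Fintype n] [DecidableEq n] [Nonempty n]

noncomputable def toE (u : n → ℝ) : EuclideanSpace ℝ n := (WithLp.equiv 2 (n → ℝ)).symm u

lemma dot_eq_inner (u v : n → ℝ) : u ⬝ᵥ v = (inner ℝ (toE u) (toE v) : ℝ) := by
  simp [PiLp.inner_apply, toE, dotProduct, RCLike.inner_apply, conj_trivial, mul_comm]

lemma toE_coe (w : EuclideanSpace ℝ n) : toE w.ofLp = w :=
  (WithLp.equiv 2 (n → ℝ)).symm_apply_apply w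

lemma herm_aux (A : Matrix n n ℝ) (hA : A.IsHermitian) (i : n) (w : n → ℝ) :
    ⇑(hA.eigenvectorBasis i) ⬝ᵥ (A *ᵥ w) = hA.eigenvalues i * (⇑(hA.eigenvectorBasis i) ⬝ᵥ w) := by
  have hT : Aᵀ = A := by rw [← conjTranspose_eq_transpose_of_trivial, hA.eq]
  have h1 : ⇑(hA.eigenvectorBasis i) ⬝ᵥ (A *ᵥ w)
      = (A *ᵥ ⇑(hA.eigenvectorBasis i)) ⬝ᵥ w := by
    rw [dotProduct_mulVec, ← mulVec_transpose, hT]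
  rw [h1, hA.mulVec_eigenvectorBasis, smul_dotProduct, smul_eq_mul]

lemma herm_spec (A : Matrix n n ℝ) (hA : A.IsHermitian) :
    ∃ lam : ℝ, IsGreatest {μ : ℝ | ∃ v : n → ℝ, v ≠ 0 ∧ A *ᵥ v = μ • v} lam ∧
      (∀ k : n → ℝ, k ⬝ᵥ k = 1 → k ⬝ᵥ A *ᵥ k ≤ lam) ∧
      (∃ k : n → ℝ, k ⬝ᵥ k = 1 ∧ k ⬝ᵥ A *ᵥ k = lam) := by
  set B := hA.eigenvectorBasis with hB
  obtain ⟨i0, hi0⟩ := Finite.exists_max hA.eigenvalues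
  have hBin : ∀ (u : n → ℝ) i, (inner ℝ (B i) (toE u) : ℝ) = ⇑(B i) ⬝ᵥ u := by
    intro u i
    rw [← toE_coe (B i), ← dot_eq_inner, toE_coe]
  have hunit : ∀ i, ⇑(B i) ⬝ᵥ ⇑(B i) = 1 := by
    intro i
    rw [dot_eq_inner, toE_coe, real_inner_self_eq_norm_sq, B.orthonormal.1 i]
    norm_num
  have hne : ∀ i, ⇑(B i) ≠ (0 : n → ℝ) := by
    intro i h
    apply B.orthonormal.ne_zero i
    apply (WithLp.equiv 2 (n → ℝ)).injective
    simpa using h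
  refine ⟨hA.eigenvalues i0, ⟨⟨⇑(B i0), hne i0, hA.mulVec_eigenvectorBasis i0⟩, ?_⟩, ?_, ?_⟩
  · rintro μ ⟨v, hv0, hv⟩
    have key : ∀ i, hA.eigenvalues i * (⇑(B i) ⬝ᵥ v) = μ * (⇑(B i) ⬝ᵥ v) := by
      intro i
      rw [hB, ← herm_aux A hA i v, hv, dotProduct_smul, smul_eq_mul]
    have hex : ∃ i, ⇑(B i) ⬝ᵥ v ≠ 0 := by
      by_contra h
      push_neg at h
      apply hv0
      have h0 : v ⬝ᵥ v = 0 := by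
        rw [dot_eq_inner, ← B.sum_inner_mul_inner (toE v) (toE v)]
        refine Finset.sum_eq_zero fun i _ => ?_
        rw [hBin, h i, mul_zero]
      exact dotProduct_self_eq_zero.mp h0
    obtain ⟨i, hi⟩ := hex
    have : hA.eigenvalues i = μ := by
      have hk := key i
      rcases mul_eq_mul_right_iff.mp hk with h | h
      · exact h
      · exact absurd h hi
    exact this ▸ hi0 i
  · intro k hk
    have h1 : k ⬝ᵥ A *ᵥ k = ∑ i, (⇑(B i) ⬝ᵥ k) * (⇑(B i) ⬝ᵥ (A *ᵥ k)) := by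
      rw [dot_eq_inner, ← B.sum_inner_mul_inner (toE k) (toE (A *ᵥ k))]
      refine Finset.sum_congr rfl fun i _ => ?_
      rw [real_inner_comm (B i) (toE k)]
      simp only [hBin]
    have h2 : (k ⬝ᵥ k : ℝ) = ∑ i, (⇑(B i) ⬝ᵥ k) * (⇑(B i) ⬝ᵥ k) := by
      rw [dot_eq_inner, ← B.sum_inner_mul_inner (toE k) (toE k)]
      refine Finset.sum_congr rfl fun i _ => ?_
      rw [real_inner_comm (B i) (toE k)]
      simp only [hBin]
    rw [h1]
    calc ∑ i, (⇑(B i) ⬝ᵥ k) * (⇑(B i) ⬝ᵥ (A *ᵥ k))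
        = ∑ i, hA.eigenvalues i * ((⇑(B i) ⬝ᵥ k) * (⇑(B i) ⬝ᵥ k)) := by
          refine Finset.sum_congr rfl fun i _ => ?_
          rw [hB, herm_aux A hA i k]
          ring
      _ ≤ ∑ i, hA.eigenvalues i0 * ((⇑(B i) ⬝ᵥ k) * (⇑(B i) ⬝ᵥ k)) := by
          refine Finset.sum_le_sum fun i _ => ?_
          exact mul_le_mul_of_nonneg_right (hi0 i) (mul_self_nonneg _)
      _ = hA.eigenvalues i0 * (k ⬝ᵥ k) := by rw [h2, Finset.mul_sum]
      _ = hA.eigenvalues i0 := by rw [hk, mul_one]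
  · refine ⟨⇑(B i0), hunit i0, ?_⟩
    rw [hB, hA.mulVec_eigenvectorBasis, dotProduct_smul, smul_eq_mul, ← hB, hunit i0, mul_one]

end herm

lemma M_herm (x y : Fin 3 → ℝ) (T : Matrix (Fin 3) (Fin 3) ℝ) (ℓ : Fin 3 → ℝ) :
    (vecMulVec x x + T * vecMulVec ℓ ℓ * Tᵀ +
      (ℓ ⬝ᵥ (vecMulVec y y).mulVec ℓ) • (1 : Matrix (Fin 3) (Fin 3) ℝ)).IsHermitian := by
  have h1 : (vecMulVec x x).IsHermitian := by
    show (vecMulVec x x)ᴴ = vecMulVec x x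
    ext i j
    simp [vecMulVec_apply, mul_comm]
  have hL : (vecMulVec ℓ ℓ).IsHermitian := by
    show (vecMulVec ℓ ℓ)ᴴ = vecMulVec ℓ ℓ
    ext i j
    simp [vecMulVec_apply, mul_comm]
  have h2 : (T * vecMulVec ℓ ℓ * Tᵀ).IsHermitian := by
    rw [← conjTranspose_eq_transpose_of_trivial T]
    exact isHermitian_mul_mul_conjTranspose T hL
  have h3 : ((ℓ ⬝ᵥ (vecMulVec y y).mulVec ℓ) • (1 : Matrix (Fin 3) (Fin 3) ℝ)).IsHermitian := by
    show _ᴴ = _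
    ext i j
    simp [Matrix.smul_apply, Matrix.one_apply, eq_comm]
  exact (h1.add h2).add h3

lemma trace_key (x y : Fin 3 → ℝ) (T : Matrix (Fin 3) (Fin 3) ℝ) (k ℓ : Fin 3 → ℝ)
    (hk : k ⬝ᵥ k = 1) :
    Matrix.trace (vecMulVec x x * vecMulVec k k + vecMulVec y y * vecMulVec ℓ ℓ +
        T * vecMulVec ℓ ℓ * Tᵀ * vecMulVec k k)
      = k ⬝ᵥ (vecMulVec x x + T * vecMulVec ℓ ℓ * Tᵀ +
        (ℓ ⬝ᵥ (vecMulVec y y).mulVec ℓ) • (1 : Matrix (Fin 3) (Fin 3) ℝ)) *ᵥ k := by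
  simp only [dotProduct, Fin.sum_univ_three] at hk
  simp only [Matrix.trace, Matrix.diag, Matrix.mul_apply, Matrix.add_apply, Matrix.smul_apply,
    Matrix.one_apply, Matrix.transpose_apply, vecMulVec_apply, Matrix.mulVec, dotProduct,
    Fin.sum_univ_three, smul_eq_mul, Fin.isValue]
  norm_num [Fin.ext_iff]
  linear_combination (-(y 0 * ℓ 0 + y 1 * ℓ 1 + y 2 * ℓ 2)^2) * hk

/-- Reduction of the two-sided optimization to a one-sided one: with `X = xᵀx`,
`Y = yᵀy`, `K = kᵀk`, `L = ℓᵀℓ`, and `M(ℓ) = X + TLTᵀ + ⟨ℓ,Yℓᵀ⟩·I₃`, the supremum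
of `f(k,ℓ) = Tr(XK + YL + TLTᵀK)` over pairs of unit vectors `(k,ℓ)` equals the
supremum over unit vectors `ℓ` of the largest eigenvalue of `M(ℓ)`. -/
theorem stmt_8 (x y : Fin 3 → ℝ) (T : Matrix (Fin 3) (Fin 3) ℝ) :
    sSup {f : ℝ | ∃ k ℓ : Fin 3 → ℝ, k ⬝ᵥ k = 1 ∧ ℓ ⬝ᵥ ℓ = 1 ∧
        f = Matrix.trace (vecMulVec x x * vecMulVec k k +
          vecMulVec y y * vecMulVec ℓ ℓ +
          T * vecMulVec ℓ ℓ * Tᵀ * vecMulVec k k)} =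
    sSup {lam : ℝ | ∃ ℓ : Fin 3 → ℝ, ℓ ⬝ᵥ ℓ = 1 ∧
        IsGreatest {μ : ℝ | ∃ v : Fin 3 → ℝ, v ≠ 0 ∧
          (vecMulVec x x + T * vecMulVec ℓ ℓ * Tᵀ +
            (ℓ ⬝ᵥ (vecMulVec y y).mulVec ℓ) •
              (1 : Matrix (Fin 3) (Fin 3) ℝ)).mulVec v = μ • v} lam} := by
  apply csSup_eq_csSup_of_forall_exists_le
  · rintro f ⟨k, ℓ, hk, hℓ, rfl⟩
    obtain ⟨lam, hgr, hray, -⟩ := herm_spec _ (M_herm x y T ℓ)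
    exact ⟨lam, ⟨ℓ, hℓ, hgr⟩, by rw [trace_key x y T k ℓ hk]; exact hray k hk⟩
  · rintro b ⟨ℓ, hℓ, hgr⟩
    obtain ⟨lam, hgr', hray, k, hk, hkey⟩ := herm_spec _ (M_herm x y T ℓ)
    have hb : b = lam := hgr.unique hgr'
    exact ⟨_, ⟨k, ℓ, hk, hℓ, rfl⟩, by rw [trace_key x y T k ℓ hk, hkey, hb]⟩
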